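/- A 4×4 real matrix M satisfies M Isoc(â) = Isoc(â) M for all a ∈ ℝ³ and M K = K M if and only if M is a real linear combination of I₄ and K. -/

import Mathlib

open Matrix

def isoc (a : Fin 3 → ℝ) : Matrix (Fin 4) (Fin 4) ℝ :=
  !![0, -a 2, a 1, -a 0;
     a 2, 0, -a 0, -a 1;
     -a 1, a 0, 0, -a 2;
     a 0, a 1, a 2, 0]

def Kmat : Matrix (Fin 4) (Fin 4) ℝ :=
  !![0,0,0,-1; 0,0,1,0; 0,-1,0,0; 1,0,0,0]

set_option maxHeartbeats 1000000 in
theorem commutant_is_span_I_K (M : Matrix (Fin 4) (Fin 4) ℝ) :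
    ((∀ a : Fin 3 → ℝ, M * isoc a = isoc a * M) ∧ M * Kmat = Kmat * M) ↔
      ∃ c d : ℝ, M = c • (1 : Matrix (Fin 4) (Fin 4) ℝ) + d • Kmat := by
  constructor
  · rintro ⟨h, hK⟩
    have h0 := h ![1,0,0]
    have h1 := h ![0,1,0]
    have h2 := h ![0,0,1]
    have E000 := congrFun (congrFun h0 0) 0
    have E001 := congrFun (congrFun h0 0) 1
    have E002 := congrFun (congrFun h0 0) 2
    have E003 := congrFun (congrFun h0 0) 3
    have E010 := congrFun (congrFun h0 1) 0
    have E011 := congrFun (congrFun h0 1) 1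
    have E012 := congrFun (congrFun h0 1) 2
    have E013 := congrFun (congrFun h0 1) 3
    have E020 := congrFun (congrFun h0 2) 0
    have E021 := congrFun (congrFun h0 2) 1
    have E022 := congrFun (congrFun h0 2) 2
    have E023 := congrFun (congrFun h0 2) 3
    have E030 := congrFun (congrFun h0 3) 0
    have E031 := congrFun (congrFun h0 3) 1
    have E032 := congrFun (congrFun h0 3) 2
    have E033 := congrFun (congrFun h0 3) 3
    have E100 := congrFun (congrFun h1 0) 0
    have E101 := congrFun (congrFun h1 0) 1
    have E102 := congrFun (congrFun h1 0) 2
    have E103 := congrFun (congrFun h1 0) 3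
    have E110 := congrFun (congrFun h1 1) 0
    have E111 := congrFun (congrFun h1 1) 1
    have E112 := congrFun (congrFun h1 1) 2
    have E113 := congrFun (congrFun h1 1) 3
    have E120 := congrFun (congrFun h1 2) 0
    have E121 := congrFun (congrFun h1 2) 1
    have E122 := congrFun (congrFun h1 2) 2
    have E123 := congrFun (congrFun h1 2) 3
    have E130 := congrFun (congrFun h1 3) 0
    have E131 := congrFun (congrFun h1 3) 1
    have E132 := congrFun (congrFun h1 3) 2
    have E133 := congrFun (congrFun h1 3) 3
    have E200 := congrFun (congrFun h2 0) 0
    have E201 := congrFun (congrFun h2 0) 1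
    have E202 := congrFun (congrFun h2 0) 2
    have E203 := congrFun (congrFun h2 0) 3
    have E210 := congrFun (congrFun h2 1) 0
    have E211 := congrFun (congrFun h2 1) 1
    have E212 := congrFun (congrFun h2 1) 2
    have E213 := congrFun (congrFun h2 1) 3
    have E220 := congrFun (congrFun h2 2) 0
    have E221 := congrFun (congrFun h2 2) 1
    have E222 := congrFun (congrFun h2 2) 2
    have E223 := congrFun (congrFun h2 2) 3
    have E230 := congrFun (congrFun h2 3) 0
    have E231 := congrFun (congrFun h2 3) 1
    have E232 := congrFun (congrFun h2 3) 2
    have E233 := congrFun (congrFun h2 3) 3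
    have EK00 := congrFun (congrFun hK 0) 0
    have EK01 := congrFun (congrFun hK 0) 1
    have EK02 := congrFun (congrFun hK 0) 2
    have EK03 := congrFun (congrFun hK 0) 3
    have EK10 := congrFun (congrFun hK 1) 0
    have EK11 := congrFun (congrFun hK 1) 1
    have EK12 := congrFun (congrFun hK 1) 2
    have EK13 := congrFun (congrFun hK 1) 3
    have EK20 := congrFun (congrFun hK 2) 0
    have EK21 := congrFun (congrFun hK 2) 1
    have EK22 := congrFun (congrFun hK 2) 2
    have EK23 := congrFun (congrFun hK 2) 3
    have EK30 := congrFun (congrFun hK 3) 0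
    have EK31 := congrFun (congrFun hK 3) 1
    have EK32 := congrFun (congrFun hK 3) 2
    have EK33 := congrFun (congrFun hK 3) 3
    norm_num [isoc, Kmat, Matrix.mul_apply, Fin.sum_univ_four] at E000 E001 E002 E003 E010 E011 E012 E013 E020 E021 E022 E023 E030 E031 E032 E033 E100 E101 E102 E103 E110 E111 E112 E113 E120 E121 E122 E123 E130 E131 E132 E133 E200 E201 E202 E203 E210 E211 E212 E213 E220 E221 E222 E223 E230 E231 E232 E233 EK00 EK01 EK02 EK03 EK10 EK11 EK12 EK13 EK20 EK21 EK22 EK23 EK30 EK31 EK32 EK33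
    simp at E000 E001 E002 E003 E010 E011 E012 E013 E020 E021 E022 E023 E030 E031 E032 E033 E100 E101 E102 E103 E110 E111 E112 E113 E120 E121 E122 E123 E130 E131 E132 E133 E200 E201 E202 E203 E210 E211 E212 E213 E220 E221 E222 E223 E230 E231 E232 E233 EK00 EK01 EK02 EK03 EK10 EK11 EK12 EK13 EK20 EK21 EK22 EK23 EK30 EK31 EK32 EK33
    
    clear h h0 h1 h2 hK
    refine ⟨M 0 0, M 3 0, ?_⟩
    ext i j
    fin_cases i <;> fin_cases j <;>
      simp [Kmat, Matrix.one_apply, Matrix.vecHead, Matrix.vecTail] <;>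
      linarith
  · rintro ⟨c, d, rfl⟩
    constructor
    · intro a
      ext i j
      fin_cases i <;> fin_cases j <;>
        simp [isoc, Kmat, Matrix.mul_apply, Fin.sum_univ_four, Matrix.one_apply, Matrix.vecHead, Matrix.vecTail] <;> ring
    · ext i j
      fin_cases i <;> fin_cases j <;>
        simp [Kmat, Matrix.mul_apply, Fin.sum_univ_four, Matrix.one_apply, Matrix.vecHead, Matrix.vecTail]
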